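/- Consider the Frank-Wolfe algorithm with step size γ_t = min{g_t/C, 1} on a continuously differentiable (possibly non-convex) f with curvature constant at most C > 0 over a compact convex set M. Then the minimal FW gap satisfies min_{0≤k≤t} g_k ≤ max{2h_0, C}/√(t+1) for all t ≥ 0, where h_0 := f(x_0) − min_{x∈M} f(x). -/

import Mathlib

open RealInnerProductSpace

/-- convergence of Frank-Wolfe with step size `γ_t = min{g_t/C, 1}` on a
possibly non-convex `f`: `min_{0≤k≤t} g_k ≤ max{2h_0, C}/√(t+1)`, where
`h_0 = f(x_0) - min_{x∈M} f(x)`. -/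
theorem frankWolfe_nonconvex_convergence {d : ℕ}
    (f : EuclideanSpace ℝ (Fin d) → ℝ) (M : Set (EuclideanSpace ℝ (Fin d)))
    (hMne : M.Nonempty) (hMcp : IsCompact M) (hMcv : Convex ℝ M) (hf : ContDiff ℝ 1 f)
    (C : ℝ) (hC : 0 < C)
    (hcurv : ∀ x ∈ M, ∀ s ∈ M, ∀ γ ∈ Set.Icc (0:ℝ) 1,
      f (x + γ • (s - x)) ≤ f x + γ * ⟪gradient f x, s - x⟫ + γ ^ 2 / 2 * C)
    (x s : ℕ → EuclideanSpace ℝ (Fin d)) (g γ : ℕ → ℝ)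
    (hx0 : x 0 ∈ M)
    (hsM : ∀ t, s t ∈ M)
    (hsmin : ∀ t, ∀ s' ∈ M, ⟪s t, gradient f (x t)⟫ ≤ ⟪s', gradient f (x t)⟫)
    (hg : ∀ t, g t = ⟪s t - x t, -gradient f (x t)⟫)
    (hγ : ∀ t, γ t = min (g t / C) 1)
    (hxsucc : ∀ t, x (t + 1) = x t + γ t • (s t - x t)) :
    ∀ t : ℕ,
      (Finset.range (t + 1)).inf' Finset.nonempty_range_add_one g ≤
        max (2 * (f (x 0) - sInf (f '' M))) C / Real.sqrt ((t : ℝ) + 1) := by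
  have hbdd : BddBelow (f '' M) := (hMcp.image hf.continuous).bddBelow
  have hg0' : ∀ k, x k ∈ M → 0 ≤ g k := by
    intro k hxk
    have h1 := hsmin k (x k) hxk
    rw [hg k, inner_neg_right, inner_sub_left]
    linarith
  have hxM : ∀ k, x k ∈ M := by
    intro k
    induction k with
    | zero => exact hx0
    | succ n ih =>
      have hgn := hg0' n ih
      have hγ0 : 0 ≤ γ n := by
        rw [hγ n]; exact le_min (div_nonneg hgn hC.le) zero_le_one
      have hγ1 : γ n ≤ 1 := by rw [hγ n]; exact min_le_right _ _
      have hmem := hMcv ih (hsM n) (by linarith : (0:ℝ) ≤ 1 - γ n) hγ0 (by ring)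
      have heq : x n + γ n • (s n - x n) = (1 - γ n) • x n + γ n • s n := by module
      rw [hxsucc n, heq]
      exact hmem
  have hg0 : ∀ k, 0 ≤ g k := fun k => hg0' k (hxM k)
  have hγ0 : ∀ k, 0 ≤ γ k := by
    intro k; rw [hγ k]; exact le_min (div_nonneg (hg0 k) hC.le) zero_le_one
  have hγ1 : ∀ k, γ k ≤ 1 := by intro k; rw [hγ k]; exact min_le_right _ _
  have hdec : ∀ k, f (x (k+1)) ≤ f (x k) - (γ k * g k - (γ k)^2/2 * C) := by
    intro k
    have hc := hcurv (x k) (hxM k) (s k) (hsM k) (γ k) ⟨hγ0 k, hγ1 k⟩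
    have hinner : ⟪gradient f (x k), s k - x k⟫ = -(g k) := by
      rw [hg k, inner_neg_right, real_inner_comm (gradient f (x k))]; ring
    rw [hinner] at hc
    rw [hxsucc k]
    linarith
  -- nonnegativity of h0
  have hsInf0 : sInf (f '' M) ≤ f (x 0) := csInf_le hbdd (Set.mem_image_of_mem f hx0)
  intro t
  set h0 : ℝ := f (x 0) - sInf (f '' M) with hh0
  have hh00 : 0 ≤ h0 := by simp only [hh0]; linarith
  set G : ℝ := (Finset.range (t + 1)).inf' Finset.nonempty_range_add_one g with hGdef
  have hG0 : 0 ≤ G := Finset.le_inf' _ _ (fun k _ => hg0 k)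
  set D : ℝ := min (G^2/(2*C)) (G/2) with hDdef
  have hstep : ∀ k ∈ Finset.range (t+1), D ≤ f (x k) - f (x (k+1)) := by
    intro k hk
    have hGk : G ≤ g k := Finset.inf'_le g hk
    have hgk0 : 0 ≤ g k := hg0 k
    have hdk := hdec k
    by_cases hcase : g k ≤ C
    · have hγk : γ k = g k / C := by
        rw [hγ k]; exact min_eq_left ((div_le_one hC).mpr hcase)
      have hval : γ k * g k - (γ k)^2/2*C = g k^2/(2*C) := by
        rw [hγk]; field_simp; ring
      have hDle : D ≤ g k ^ 2 / (2*C) := by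
        calc D ≤ G^2/(2*C) := min_le_left _ _
          _ ≤ g k ^ 2 / (2*C) := by gcongr
      linarith
    · push_neg at hcase
      have hγk : γ k = 1 := by
        rw [hγ k]; exact min_eq_right ((one_le_div hC).mpr hcase.le)
      have hDle : D ≤ γ k * g k - (γ k)^2/2*C := by
        rw [hγk]
        have h1 : D ≤ G/2 := min_le_right _ _
        nlinarith
      linarith
  have htel : ∀ m, m ≤ t + 1 → (m:ℝ) * D ≤ f (x 0) - f (x m) := by
    intro m
    induction m with
    | zero => intro _; simp
    | succ p ih =>
      intro hp
      have hpt : p ∈ Finset.range (t+1) := Finset.mem_range.mpr (by omega)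
      have h1 := hstep p hpt
      have h2 := ih (by omega)
      push_cast
      linarith
  have hkey : ((t:ℝ) + 1) * D ≤ h0 := by
    have h1 := htel (t+1) le_rfl
    have h2 : sInf (f '' M) ≤ f (x (t+1)) := csInf_le hbdd (Set.mem_image_of_mem f (hxM (t+1)))
    push_cast at h1
    simp only [hh0]
    linarith
  -- final arithmetic
  set n : ℝ := (t:ℝ) + 1 with hn
  have hn1 : 1 ≤ n := by
    have := Nat.cast_nonneg (α := ℝ) t; simp only [hn]; linarith
  have hn0 : 0 < n := by linarith
  have hsn : Real.sqrt n * Real.sqrt n = n := Real.mul_self_sqrt (by linarith)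
  have hsn1 : 1 ≤ Real.sqrt n := by
    rw [show (1:ℝ) = Real.sqrt 1 by simp]
    exact Real.sqrt_le_sqrt hn1
  have hsnpos : 0 < Real.sqrt n := by linarith
  have hsnn : Real.sqrt n ≤ n := by nlinarith
  set B : ℝ := max (2 * h0) C with hB
  have hB1 : 2 * h0 ≤ B := le_max_left _ _
  have hB2 : C ≤ B := le_max_right _ _
  have hB0 : 0 < B := lt_of_lt_of_le hC hB2
  by_cases hGC : G ≤ C
  · have hmin : D = G^2/(2*C) := min_eq_left (by rw [div_le_div_iff₀ (by linarith) (by norm_num)]; nlinarith)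
    rw [hmin] at hkey
    have hGn : G^2 * n ≤ 2 * C * h0 := by
      rw [mul_comm] at hkey
      rw [div_mul_eq_mul_div, div_le_iff₀ (by linarith : (0:ℝ) < 2*C)] at hkey
      linarith
    have hsq : (G * Real.sqrt n)^2 ≤ B^2 := by nlinarith
    have hfin : G * Real.sqrt n ≤ B := by
      have := Real.sqrt_le_sqrt hsq
      rwa [Real.sqrt_sq (by positivity), Real.sqrt_sq hB0.le] at this
    rw [le_div_iff₀ hsnpos]
    exact hfin
  · push_neg at hGC
    have hmin : D = G/2 := min_eq_right (by rw [div_le_div_iff₀ (by norm_num) (by linarith)]; nlinarith)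
    rw [hmin] at hkey
    have h1 : G ≤ 2 * h0 / n := by
      rw [le_div_iff₀ hn0]; nlinarith
    have h2 : 2 * h0 / n ≤ B / n := by gcongr
    have h3 : B / n ≤ B / Real.sqrt n := by gcongr
    linarith
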